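/- Let f be a multiplicative ℂ-linear map on m×m complex matrices with fⁿ = id, Gᵢ(X) = (A·f(A)⋯fⁱ⁻¹(A))·fⁱ(X)·(fⁱ⁻¹(B)⋯f(B)·B), and let k be a positive integer. If 𝒳 solves the Stein equation 𝒳 = Gₙ(𝒳) + Σ_{i=0}^{n-1} Gᵢ(C), then the value (1/(kn))·Σ_{i=0}^{kn-1} (Gᵢ(𝒳) + (kn−i−1)·Gᵢ(C)) equals (1/n)·Σ_{i=0}^{n-1} (Gᵢ(𝒳) + (n−i−1)·Gᵢ(C)); i.e., the averaging formula is independent of the period multiple k used. -/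
import Mathlib


open Finset

/-- Ordered product `A · f(A) · f²(A) ⋯ f^{i-1}(A)`. -/
noncomputable def prodA {m : ℕ} (f : Matrix (Fin m) (Fin m) ℂ → Matrix (Fin m) (Fin m) ℂ)
    (A : Matrix (Fin m) (Fin m) ℂ) : ℕ → Matrix (Fin m) (Fin m) ℂ
  | 0 => 1
  | i + 1 => prodA f A i * f^[i] A

/-- Ordered product `f^{i-1}(B) ⋯ f(B) · B`. -/
noncomputable def prodB {m : ℕ} (f : Matrix (Fin m) (Fin m) ℂ → Matrix (Fin m) (Fin m) ℂ)
    (B : Matrix (Fin m) (Fin m) ℂ) : ℕ → Matrix (Fin m) (Fin m) ℂ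
  | 0 => 1
  | i + 1 => f^[i] B * prodB f B i

/-- `Gᵢ(X) = (A·f(A)⋯f^{i-1}(A)) · fⁱ(X) · (f^{i-1}(B)⋯f(B)·B)`. -/
noncomputable def G {m : ℕ} (f : Matrix (Fin m) (Fin m) ℂ → Matrix (Fin m) (Fin m) ℂ)
    (A B : Matrix (Fin m) (Fin m) ℂ) (i : ℕ) (X : Matrix (Fin m) (Fin m) ℂ) :
    Matrix (Fin m) (Fin m) ℂ :=
  prodA f A i * f^[i] X * prodB f B i

/-- The averaging operator `F(𝒳) = (1/n)·Σ_{i<n} (Gᵢ(𝒳) + (n−i−1)·Gᵢ(C))`. -/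
noncomputable def Fop {m : ℕ} (f : Matrix (Fin m) (Fin m) ℂ → Matrix (Fin m) (Fin m) ℂ)
    (A B C : Matrix (Fin m) (Fin m) ℂ) (n : ℕ) (𝒳 : Matrix (Fin m) (Fin m) ℂ) :
    Matrix (Fin m) (Fin m) ℂ :=
  ((n : ℂ)⁻¹) • ∑ i ∈ range n, (G f A B i 𝒳 + ((n - i - 1 : ℕ) : ℂ) • G f A B i C)

section Aux

variable {m : ℕ} (f : Matrix (Fin m) (Fin m) ℂ → Matrix (Fin m) (Fin m) ℂ)

lemma iter_add (hlin : IsLinearMap ℂ f) :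
    ∀ i (X Y : Matrix (Fin m) (Fin m) ℂ), f^[i] (X + Y) = f^[i] X + f^[i] Y := by
  intro i
  induction i with
  | zero => simp
  | succ i ih =>
    intro X Y
    simp only [Function.iterate_succ_apply, hlin.map_add, ih]

lemma iter_mul (hmul : ∀ X Y, f (X * Y) = f X * f Y) :
    ∀ i (X Y : Matrix (Fin m) (Fin m) ℂ), f^[i] (X * Y) = f^[i] X * f^[i] Y := by
  intro i
  induction i with
  | zero => simp
  | succ i ih =>
    intro X Y
    simp only [Function.iterate_succ_apply, hmul, ih]

lemma iter_one {n : ℕ} (hn : 0 < n) (hmul : ∀ X Y, f (X * Y) = f X * f Y)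
    (hper : f^[n] = id) : ∀ i, f^[i] (1 : Matrix (Fin m) (Fin m) ℂ) = 1 := by
  have hone : f 1 = 1 := by
    have h1 : f (f^[n-1] 1) = 1 := by
      have : f^[n] (1 : Matrix (Fin m) (Fin m) ℂ) = 1 := by rw [hper]; rfl
      rwa [show n = (n-1) + 1 by omega, Function.iterate_succ_apply'] at this
    calc f 1 = f 1 * 1 := (mul_one _).symm
    _ = f 1 * f (f^[n-1] 1) := by rw [h1]
    _ = f (1 * f^[n-1] 1) := (hmul _ _).symm
    _ = 1 := by rw [one_mul, h1]
  intro i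
  induction i with
  | zero => rfl
  | succ i ih => rw [Function.iterate_succ_apply, hone, ih]

variable (A B : Matrix (Fin m) (Fin m) ℂ)

lemma prodA_add {n : ℕ} (hn : 0 < n) (hmul : ∀ X Y, f (X * Y) = f X * f Y)
    (hper : f^[n] = id) (i : ℕ) :
    ∀ j, prodA f A (i + j) = prodA f A i * f^[i] (prodA f A j) := by
  intro j
  induction j with
  | zero => simp [prodA, iter_one f hn hmul hper]
  | succ j ih =>
    show prodA f A (i + j + 1) = _
    rw [prodA, ih, prodA, iter_mul f hmul, mul_assoc, Function.iterate_add_apply]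

lemma prodB_add {n : ℕ} (hn : 0 < n) (hmul : ∀ X Y, f (X * Y) = f X * f Y)
    (hper : f^[n] = id) (i : ℕ) :
    ∀ j, prodB f B (i + j) = f^[i] (prodB f B j) * prodB f B i := by
  intro j
  induction j with
  | zero => simp [prodB, iter_one f hn hmul hper]
  | succ j ih =>
    show prodB f B (i + j + 1) = _
    rw [prodB, ih, prodB, iter_mul f hmul, mul_assoc, Function.iterate_add_apply]

lemma G_comp {n : ℕ} (hn : 0 < n) (hmul : ∀ X Y, f (X * Y) = f X * f Y)
    (hper : f^[n] = id) (i j : ℕ) (X : Matrix (Fin m) (Fin m) ℂ) :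
    G f A B i (G f A B j X) = G f A B (i + j) X := by
  simp only [G, iter_mul f hmul, prodA_add f A hn hmul hper,
    prodB_add f B hn hmul hper, Function.iterate_add_apply]
  noncomm_ring

lemma G_add (hlin : IsLinearMap ℂ f) (i : ℕ) (X Y : Matrix (Fin m) (Fin m) ℂ) :
    G f A B i (X + Y) = G f A B i X + G f A B i Y := by
  simp only [G, iter_add f hlin, mul_add, add_mul]

/-- `Gᵢ` as an additive monoid hom. -/
noncomputable def Gm (hlin : IsLinearMap ℂ f) (i : ℕ) :
    Matrix (Fin m) (Fin m) ℂ →+ Matrix (Fin m) (Fin m) ℂ :=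
  AddMonoidHom.mk' (G f A B i) (G_add f A B hlin i)

/-- Rewriting the weighted sum as a double sum. -/
lemma coef_sum (c : ℕ → Matrix (Fin m) (Fin m) ℂ) :
    ∀ N, ∑ i ∈ range N, ((N - i - 1 : ℕ) : ℂ) • c i
      = ∑ i ∈ range N, ∑ s ∈ range i, c s := by
  intro N
  induction N with
  | zero => simp
  | succ N ih =>
    rw [Finset.sum_range_succ, Finset.sum_range_succ (fun i => ∑ s ∈ range i, c s)]
    have h1 : ∑ i ∈ range N, ((N + 1 - i - 1 : ℕ) : ℂ) • c i
        = ∑ i ∈ range N, (((N - i - 1 : ℕ) : ℂ) • c i + c i) := by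
      apply Finset.sum_congr rfl
      intro i hi
      have hi' : i < N := Finset.mem_range.mp hi
      have : (N + 1 - i - 1 : ℕ) = (N - i - 1) + 1 := by omega
      rw [this, Nat.cast_add, Nat.cast_one, add_smul, one_smul]
    rw [h1, Finset.sum_add_distrib, ih]
    simp

end Aux

theorem stmt_19 {m n : ℕ} (hn : 0 < n) (k : ℕ) (hk : 0 < k)
    (f : Matrix (Fin m) (Fin m) ℂ → Matrix (Fin m) (Fin m) ℂ)
    (hlin : IsLinearMap ℂ f) (hmul : ∀ X Y, f (X * Y) = f X * f Y)
    (hper : f^[n] = id)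
    (A B C 𝒳 : Matrix (Fin m) (Fin m) ℂ)
    (h𝒳 : 𝒳 = G f A B n 𝒳 + ∑ i ∈ range n, G f A B i C) :
    Fop f A B C (k * n) 𝒳 = Fop f A B C n 𝒳 := by
  set Q : ℕ → Matrix (Fin m) (Fin m) ℂ :=
    fun i => G f A B i 𝒳 + ∑ s ∈ range i, G f A B s C with hQdef
  -- periodicity of Q
  have hQper : ∀ i, Q (i + n) = Q i := by
    intro i
    have hGi : G f A B i 𝒳 = G f A B (i + n) 𝒳 + ∑ t ∈ range n, G f A B (i + t) C := by
      conv_lhs => rw [h𝒳]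
      rw [G_add f A B hlin, G_comp f A B hn hmul hper]
      congr 1
      rw [show G f A B i (∑ t ∈ range n, G f A B t C)
            = (Gm f A B hlin i) (∑ t ∈ range n, G f A B t C) from rfl, map_sum]
      exact Finset.sum_congr rfl fun t _ => G_comp f A B hn hmul hper i t C
    have hsum : ∑ s ∈ range (i + n), G f A B s C
        = ∑ s ∈ range i, G f A B s C + ∑ t ∈ range n, G f A B (i + t) C :=
      Finset.sum_range_add _ i n
    simp only [hQdef, hsum, hGi]
    abel
  have hQshift : ∀ j i, Q (i + j * n) = Q i := by
    intro j
    induction j with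
    | zero => simp
    | succ j ih =>
      intro i
      have : i + (j + 1) * n = (i + j * n) + n := by ring
      rw [this, hQper, ih]
  -- sum of Q over k*n
  have hsumQ : ∀ j, ∑ i ∈ range (j * n), Q i = j • ∑ i ∈ range n, Q i := by
    intro j
    induction j with
    | zero => simp
    | succ j ih =>
      rw [show (j+1) * n = j * n + n by ring, Finset.sum_range_add, ih, succ_nsmul]
      congr 1
      exact Finset.sum_congr rfl fun i _ => by rw [add_comm (j*n) i, hQshift]
  -- rewrite Fop via Q
  have hFop : ∀ N, Fop f A B C N 𝒳 = ((N : ℂ)⁻¹) • ∑ i ∈ range N, Q i := by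
    intro N
    rw [Fop, Finset.sum_add_distrib, coef_sum, ← Finset.sum_add_distrib]
  rw [hFop, hFop, hsumQ]
  have hk0 : (k : ℂ) ≠ 0 := Nat.cast_ne_zero.mpr hk.ne'
  rw [← Nat.cast_smul_eq_nsmul ℂ k, smul_smul]
  congr 1
  rw [Nat.cast_mul, mul_inv, mul_comm (k:ℂ)⁻¹, mul_assoc, inv_mul_cancel₀ hk0, mul_one]
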